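/- Let K be a field, (A,Φ) a linear extended associative semigroup over K, and a,b ∈ A. The following are equivalent: (i) for every Φ-associative algebra (V,*) over K, the bilinear product m on V defined by m(x,y) = x *_a y + y *_b x satisfies m(x, m(y,z)) = 0 for all x,y,z ∈ V; (ii) b = 0 and Φ(a ⊗ a) = 0. -/

import Mathlib

open TensorProduct

section Defs

variable (K : Type) [Field K]
variable (A : Type) [AddCommGroup A] [Module K A]

/-- The "right reassociated" version of `Φ ⊗ Id` acting on `A ⊗ (A ⊗ A)`. -/
noncomputable def phiIdMap (Φ : A ⊗[K] A →ₗ[K] A ⊗[K] A) :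
    A ⊗[K] (A ⊗[K] A) →ₗ[K] A ⊗[K] (A ⊗[K] A) :=
  (TensorProduct.assoc K A A A).toLinearMap ∘ₗ (LinearMap.rTensor A Φ) ∘ₗ
    (TensorProduct.assoc K A A A).symm.toLinearMap

/-- `(A, Φ)` is a linear extended associative semigroup (ℓEAS):
`(Id ⊗ Φ) ∘ (Φ ⊗ Id) ∘ (Id ⊗ Φ) = (Φ ⊗ Id) ∘ (Id ⊗ τ) ∘ (Φ ⊗ Id)` on `A^{⊗3}`. -/
def IsLEAS (Φ : A ⊗[K] A →ₗ[K] A ⊗[K] A) : Prop :=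
  (LinearMap.lTensor A Φ) ∘ₗ phiIdMap K A Φ ∘ₗ (LinearMap.lTensor A Φ)
    = phiIdMap K A Φ ∘ₗ (LinearMap.lTensor A (TensorProduct.comm K A A).toLinearMap) ∘ₗ
        phiIdMap K A Φ

variable (V : Type) [AddCommGroup V] [Module K V]

/-- Evaluation `a ⊗ (x ⊗ y) ↦ x *_a y` of a family of products `st`. -/
noncomputable def evalSt (st : A →ₗ[K] V →ₗ[K] V →ₗ[K] V) :
    A ⊗[K] (V ⊗[K] V) →ₗ[K] V :=
  TensorProduct.lift ((TensorProduct.lift.equiv (RingHom.id K) V V V).toLinearMap ∘ₗ st)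

/-- The Sweedler-type trilinear evaluation
`(c ⊗ d) ⊗ ((x ⊗ y) ⊗ z) ↦ (x *_d y) *_c z`. -/
noncomputable def rightTri (st : A →ₗ[K] V →ₗ[K] V →ₗ[K] V) :
    (A ⊗[K] A) ⊗[K] ((V ⊗[K] V) ⊗[K] V) →ₗ[K] V :=
  evalSt K A V st
    ∘ₗ (TensorProduct.leftComm K V A V).toLinearMap
    ∘ₗ (TensorProduct.map (evalSt K A V st) LinearMap.id)
    ∘ₗ (TensorProduct.tensorTensorTensorComm K A A (V ⊗[K] V) V).toLinearMap
    ∘ₗ (LinearMap.rTensor ((V ⊗[K] V) ⊗[K] V) (TensorProduct.comm K A A).toLinearMap)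

/-- `(V, st)` is a `Φ`-associative algebra:
`x *_a (y *_b z) = Σ (x *_{d_i} y) *_{c_i} z` where `Φ(a ⊗ b) = Σ c_i ⊗ d_i`. -/
def IsPhiAssoc (Φ : A ⊗[K] A →ₗ[K] A ⊗[K] A)
    (st : A →ₗ[K] V →ₗ[K] V →ₗ[K] V) : Prop :=
  ∀ (a b : A) (x y z : V),
    st a x (st b y z) = rightTri K A V st ((Φ (a ⊗ₜ b)) ⊗ₜ ((x ⊗ₜ y) ⊗ₜ z))

/-- The space `T_A(V) = ⊕_{n≥1} A^{⊗(n−1)} ⊗ V^{⊗n}` of `A`-typed words, modelled as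
`V ⊗ T(A ⊗ V)`: the typed word `a₁…a_{n−1}x₁…x_n` is `x₁ ⊗ (a₁⊗x₂)⋯(a_{n−1}⊗x_n)`. -/
abbrev TAlg : Type := V ⊗[K] TensorAlgebra K (A ⊗[K] V)

/-- The inclusion of `V` in `T_A(V)` as typed words of length one. -/
noncomputable def iotaTA : V →ₗ[K] TAlg K A V :=
  (TensorProduct.mk K V (TensorAlgebra K (A ⊗[K] V))).flip 1

/-- The appending operation: `appTA (a ⊗ z) u = u · (a z)`. -/
noncomputable def appTA : (A ⊗[K] V) →ₗ[K] (TAlg K A V →ₗ[K] TAlg K A V) :=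
  (LinearMap.lTensorHom V)
    ∘ₗ (LinearMap.mul K (TensorAlgebra K (A ⊗[K] V))).flip
    ∘ₗ (TensorAlgebra.ι K)

/-- The Sweedler-type map `(c ⊗ d) ⊗ ((u ⊗ v) ⊗ z) ↦ (u *_d v) · (c z)` used in the
recursive definition of the products on `T_A(V)`. -/
noncomputable def recTA (st : A →ₗ[K] TAlg K A V →ₗ[K] TAlg K A V →ₗ[K] TAlg K A V) :
    (A ⊗[K] A) ⊗[K] ((TAlg K A V ⊗[K] TAlg K A V) ⊗[K] V) →ₗ[K] TAlg K A V :=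
  (TensorProduct.lift (appTA K A V).flip)
    ∘ₗ (TensorProduct.map (evalSt K A (TAlg K A V) st) (LinearMap.id (M := A ⊗[K] V)))
    ∘ₗ (TensorProduct.tensorTensorTensorComm K A A (TAlg K A V ⊗[K] TAlg K A V) V).toLinearMap
    ∘ₗ (LinearMap.rTensor ((TAlg K A V ⊗[K] TAlg K A V) ⊗[K] V)
          (TensorProduct.comm K A A).toLinearMap)

/-- `st` satisfies the defining recursion of the products `*_a` of `T_A(V)`:
`u *_a z = u·(a z)` for `z ∈ V`, and `u *_a (v·(b z)) = Σ (u *_{d_i} v)·(c_i z)`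
where `Φ(a ⊗ b) = Σ c_i ⊗ d_i`. -/
def SatisfiesRecTA (Φ : A ⊗[K] A →ₗ[K] A ⊗[K] A)
    (st : A →ₗ[K] TAlg K A V →ₗ[K] TAlg K A V →ₗ[K] TAlg K A V) : Prop :=
  (∀ (a : A) (u : TAlg K A V) (z : V), st a u (iotaTA K A V z) = appTA K A V (a ⊗ₜ z) u) ∧
  (∀ (a b : A) (u v : TAlg K A V) (z : V),
    st a u (appTA K A V (b ⊗ₜ z) v)
      = recTA K A V st ((Φ (a ⊗ₜ b)) ⊗ₜ ((u ⊗ₜ v) ⊗ₜ z)))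

/-- The Sweedler-type map `(x ⊗ y) ⊗ (c ⊗ d) ↦ (x *_d y) ⊗ c` used to define the
associative product `⋆` on `V ⊗ A`. -/
noncomputable def sweedlerMul (st : A →ₗ[K] V →ₗ[K] V →ₗ[K] V) :
    (V ⊗[K] V) ⊗[K] (A ⊗[K] A) →ₗ[K] V ⊗[K] A :=
  (LinearMap.rTensor A
      (evalSt K A V st ∘ₗ (TensorProduct.comm K (V ⊗[K] V) A).toLinearMap))
    ∘ₗ (TensorProduct.assoc K (V ⊗[K] V) A A).symm.toLinearMap
    ∘ₗ (LinearMap.lTensor (V ⊗[K] V) (TensorProduct.comm K A A).toLinearMap)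

end Defs

set_option maxRecDepth 20000
set_option maxHeartbeats 1000000
set_option synthInstance.maxHeartbeats 400000

section Aux

variable (K : Type) [Field K]
variable (A : Type) [AddCommGroup A] [Module K A]
variable (V : Type) [AddCommGroup V] [Module K V]

lemma evalSt_tmul (st : A →ₗ[K] V →ₗ[K] V →ₗ[K] V) (c : A) (u v : V) :
    evalSt K A V st (c ⊗ₜ[K] (u ⊗ₜ[K] v)) = st c u v := by
  simp [evalSt]

lemma rightTri_tmul (st : A →ₗ[K] V →ₗ[K] V →ₗ[K] V) (c d : A) (x y z : V) :
    rightTri K A V st ((c ⊗ₜ[K] d) ⊗ₜ[K] ((x ⊗ₜ[K] y) ⊗ₜ[K] z)) = st c (st d x y) z := by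
  simp [rightTri, evalSt_tmul, TensorProduct.tensorTensorTensorComm_tmul,
    TensorProduct.leftComm_tmul]

/-- The truncated free model: words of length 1, 2, 3. -/
abbrev MyV : Type := (Fin 3 → K) × (Fin 3 → Fin 3 → A) × (Fin 3 → Fin 3 → Fin 3 → (A ⊗[K] A))

/-- The raw product on `MyV`. -/
noncomputable def stFun (Φ : A ⊗[K] A →ₗ[K] A ⊗[K] A) (c : A) (x y : MyV K A) : MyV K A :=
  (0, fun i j => (x.1 i * y.1 j) • c,
      fun i j k => y.1 k • (c ⊗ₜ[K] x.2.1 i j) + x.1 i • Φ (c ⊗ₜ[K] y.2.1 j k))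

/-- The product on `MyV`, as a linear map. -/
noncomputable def stMap (Φ : A ⊗[K] A →ₗ[K] A ⊗[K] A) :
    A →ₗ[K] MyV K A →ₗ[K] MyV K A →ₗ[K] MyV K A where
  toFun c :=
  { toFun := fun x =>
    { toFun := fun y => stFun K A Φ c x y
      map_add' := fun y y' => by
        refine Prod.ext (by simp [stFun]) (Prod.ext ?_ ?_)
        · funext i j
          simp [stFun, mul_add, add_smul]
        · funext i j k
          simp [stFun, tmul_add, smul_add, add_smul]
          try abel
      map_smul' := fun r y => by
        refine Prod.ext (by simp [stFun]) (Prod.ext ?_ ?_)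
        · funext i j
          simp [stFun, smul_smul, mul_left_comm]
        · funext i j k
          simp [stFun, tmul_smul, smul_smul, smul_add, mul_comm] }
    map_add' := fun x x' => by
      refine LinearMap.ext fun y => ?_
      refine Prod.ext (by simp [stFun]) (Prod.ext ?_ ?_)
      · funext i j
        simp [stFun, add_mul, add_smul]
      · funext i j k
        simp [stFun, tmul_add, smul_add, add_smul]
        abel
    map_smul' := fun r x => by
      refine LinearMap.ext fun y => ?_
      refine Prod.ext (by simp [stFun]) (Prod.ext ?_ ?_)
      · funext i j
        simp [stFun, smul_smul, mul_assoc]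
      · funext i j k
        simp [stFun, smul_tmul, tmul_smul, map_smul, smul_add, smul_smul, mul_comm, mul_left_comm] }
  map_add' := fun c c' => by
    refine LinearMap.ext fun x => LinearMap.ext fun y => ?_
    refine Prod.ext (by simp [stFun]) (Prod.ext ?_ ?_)
    · funext i j
      simp [stFun, smul_add]
    · funext i j k
      simp [stFun, add_tmul, tmul_add, smul_add, map_add]
      abel
  map_smul' := fun r c => by
    refine LinearMap.ext fun x => LinearMap.ext fun y => ?_
    refine Prod.ext (by simp [stFun]) (Prod.ext ?_ ?_)
    · funext i j
      simp [stFun, smul_smul, mul_comm]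
    · funext i j k
      simp [stFun, smul_tmul, tmul_smul, map_smul, smul_add, smul_smul, mul_comm, mul_left_comm]

lemma stMap_apply (Φ : A ⊗[K] A →ₗ[K] A ⊗[K] A) (c : A) (x y : MyV K A) :
    stMap K A Φ c x y = stFun K A Φ c x y := rfl

lemma stMap_phiAssoc (Φ : A ⊗[K] A →ₗ[K] A ⊗[K] A) :
    IsPhiAssoc K A (MyV K A) Φ (stMap K A Φ) := by
  intro a b x y z
  have h1 : ∀ t : A ⊗[K] A,
      rightTri K A (MyV K A) (stMap K A Φ) (t ⊗ₜ[K] ((x ⊗ₜ[K] y) ⊗ₜ[K] z))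
        = (0, 0, fun i j k => (x.1 i * y.1 j * z.1 k) • t) := by
    intro t
    induction t using TensorProduct.induction_on with
    | zero =>
        rw [zero_tmul, map_zero]
        refine (Prod.ext rfl (Prod.ext rfl ?_)).symm
        funext i j k; simp
    | tmul c d =>
        rw [rightTri_tmul]
        show stFun K A Φ c (stFun K A Φ d x y) z = _
        refine Prod.ext rfl (Prod.ext ?_ ?_)
        · funext i j; simp [stFun]
        · funext i j k
          simp [stFun, tmul_smul, smul_smul, mul_assoc, mul_comm, mul_left_comm]
    | add t₁ t₂ h₁ h₂ =>
        rw [add_tmul, map_add, h₁, h₂]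
        refine Prod.ext (by simp) (Prod.ext (by simp) ?_)
        funext i j k
        simp [smul_add]
  rw [h1]
  show stFun K A Φ a x (stFun K A Φ b y z) = _
  refine Prod.ext rfl (Prod.ext ?_ ?_)
  · funext i j; simp [stFun]
  · funext i j k
    simp [stFun, tmul_smul, smul_smul, mul_assoc, mul_comm, mul_left_comm]

lemma tmul_self_eq_zero {b : A} (h : b ⊗ₜ[K] b = 0) : b = 0 := by
  by_contra hb
  obtain ⟨f, hf⟩ := LinearMap.exists_leftInverse_of_injective
    (LinearMap.toSpanSingleton K A b) (LinearMap.ker_toSpanSingleton K hb)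
  have h1 : (TensorProduct.lid K A).toLinearMap.comp
      (LinearMap.rTensor A f) (b ⊗ₜ[K] b) = b := by
    have hfb : f b = 1 := by
      have := LinearMap.congr_fun hf 1
      simpa using this
    simp [hfb]
  rw [h] at h1
  simp at h1
  exact hb h1.symm

lemma extract (Φ : A ⊗[K] A →ₗ[K] A ⊗[K] A) (a b : A)
    (hk : ∀ x y z : MyV K A,
      stMap K A Φ a x (stMap K A Φ a y z + stMap K A Φ b z y)
        + stMap K A Φ b (stMap K A Φ a y z + stMap K A Φ b z y) x = 0) :
    b = 0 ∧ Φ (a ⊗ₜ[K] a) = 0 := by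
  set e : Fin 3 → (Fin 3 → K) := fun i => Pi.single i 1 with he
  have key3 : ∀ i j k : Fin 3,
      (e 0 i * (e 1 j * e 2 k)) • Φ (a ⊗ₜ[K] a)
        + (e 0 i * (e 2 j * e 1 k)) • Φ (a ⊗ₜ[K] b)
        + ((e 1 i * e 2 j) * e 0 k) • (b ⊗ₜ[K] a)
        + ((e 2 i * e 1 j) * e 0 k) • (b ⊗ₜ[K] b) = 0 := by
    intro i j k
    have key := hk (e 0, 0, 0) (e 1, 0, 0) (e 2, 0, 0)
    have := congrArg (fun v : MyV K A => v.2.2 i j k) key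
    have this' : (((0:K)+0) • (a ⊗ₜ[K] (0:A))
          + e 0 i • Φ (a ⊗ₜ[K] ((e 1 j * e 2 k) • a + (e 2 j * e 1 k) • b)))
        + (e 0 k • (b ⊗ₜ[K] ((e 1 i * e 2 j) • a + (e 2 i * e 1 j) • b))
          + ((0:K)+0) • Φ (b ⊗ₜ[K] (0:A))) = 0 := this
    simpa [tmul_add, tmul_smul, smul_add, smul_smul, mul_assoc, mul_comm,
      mul_left_comm, add_assoc] using this'
  have hΦaa : Φ (a ⊗ₜ[K] a) = 0 := by
    have := key3 0 1 2
    simpa [he, Pi.single_apply] using this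
  have hbb : b ⊗ₜ[K] b = (0 : A ⊗[K] A) := by
    have := key3 2 1 0
    simpa [he, Pi.single_apply, hΦaa] using this
  exact ⟨tmul_self_eq_zero K A hbb, hΦaa⟩

end Aux

set_option maxRecDepth 10000
/-- Proposition 3.18, square-zero products. Let `(A, Φ)` be a linear
extended associative semigroup and `a, b ∈ A`. The following are equivalent:
(i) for every `Φ`-associative algebra `(V, *)`, the product `m(x,y) = x *_a y + y *_b x`
satisfies `m(x, m(y,z)) = 0` for all `x, y, z`;
(ii) `b = 0` and `Φ(a⊗a) = 0`. -/
theorem square_zero_products_iff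
    (K : Type) [Field K] (A : Type) [AddCommGroup A] [Module K A]
    (Φ : A ⊗[K] A →ₗ[K] A ⊗[K] A) (hΦ : IsLEAS K A Φ) (a b : A) :
    (∀ (V : ModuleCat K) (st : A →ₗ[K] V →ₗ[K] V →ₗ[K] V),
        IsPhiAssoc K A V Φ st →
        ∀ x y z : V,
          st a x (st a y z + st b z y) + st b (st a y z + st b z y) x = 0) ↔
      (b = 0 ∧ Φ (a ⊗ₜ a) = 0) := by
  constructor
  · intro h
    exact extract K A Φ a b
      (fun x y z => h (ModuleCat.of K (MyV K A)) (stMap K A Φ) (stMap_phiAssoc K A Φ) x y z)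
  · rintro ⟨hb, hΦaa⟩ V st hst x y z
    subst hb
    simp only [map_zero, LinearMap.zero_apply, add_zero, zero_add]
    rw [hst a a x y z, hΦaa, zero_tmul, map_zero]
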